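/- Let φ be an endomorphism of the free metabelian group M = F_2/F_2'' defined on generators by x ↦ x^α y^β z^γ, y ↦ x^a y^b z^c, where z = [x,y] and α, β, γ, a, b, c ∈ Z. Then the image of z under φ in the module F_2'/F_2'' over Z[x^{±1}, y^{±1}] is z · ( c(1 - x^α y^β) - γ(1 - x^a y^b) + y^β (1-x^α)(1-y^b)/((1-x)(1-y)) - y^b (1-x^a)(1-y^β)/((1-x)(1-y)) ). -/

import Mathlib

/- STATEMENT 7 (Lemma 4.1): Let φ be the endomorphism of the free metabelian group
   `M = F₂/F₂''` with `x ↦ x^α y^β z^γ`, `y ↦ x^a y^b z^c`, where `z = [x,y]`.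
   Then the image of `z` is
   `z · ( c(1 - x^α y^β) - γ(1 - x^a y^b) + y^β (1-x^α)(1-y^b)/((1-x)(1-y))
          - y^b (1-x^a)(1-y^β)/((1-x)(1-y)) )`.
   Using the identities `[x^p,y^q] = z·((1-x^p)(1-y^q)/((1-x)(1-y)))` and
   `[g, z^q] = z·q(1-g)` (with `[u,v] = u⁻¹v⁻¹uv`), this module element is represented
   by the group word
   `[x^α y^β, z^c] · [x^a y^b, z^γ]⁻¹ · (y^{-β} [x^α, y^b] y^β) · (y^{-b} [x^a, y^β] y^b)⁻¹`,
   so the claim is the congruence of `φ(z)` with this word modulo `F₂''`. -/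

namespace Stmt7

abbrev F := FreeGroup (Fin 2)

def x : F := FreeGroup.of 0
def y : F := FreeGroup.of 1

/-- `z = [x,y] = x⁻¹y⁻¹xy`. -/
def z : F := x⁻¹ * y⁻¹ * x * y

/-- `[u,v] = u⁻¹v⁻¹uv`. -/
def comm (u v : F) : F := u⁻¹ * v⁻¹ * u * v

/-- The endomorphism `x ↦ x^α y^β z^γ`, `y ↦ x^a y^b z^c` of the free group
(inducing the corresponding endomorphism of `F₂/F₂''`). -/
def φ (α β γ a b c : ℤ) : F →* F :=
  FreeGroup.lift (fun i => if i = 0 then x ^ α * y ^ β * z ^ γ else x ^ a * y ^ b * z ^ c)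

/-- The word representing the module element
`z·(c(1-x^αy^β) - γ(1-x^ay^b) + y^β(1-x^α)(1-y^b)/((1-x)(1-y)) - y^b(1-x^a)(1-y^β)/((1-x)(1-y)))`. -/
def rhs (α β γ a b c : ℤ) : F :=
  comm (x ^ α * y ^ β) (z ^ c) * (comm (x ^ a * y ^ b) (z ^ γ))⁻¹ *
    (y ^ (-β) * comm (x ^ α) (y ^ b) * y ^ β) *
    (y ^ (-b) * comm (x ^ a) (y ^ β) * y ^ b)⁻¹

open scoped commutatorElement

/-! ### Auxiliary general-group lemmas -/

section Helpers

variable {G : Type*} [Group G]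

/-- The commutator `[u,v] = u⁻¹v⁻¹uv` in an arbitrary group. -/
def c' (u v : G) : G := u⁻¹ * v⁻¹ * u * v

lemma c'_inv (u v : G) : (c' u v)⁻¹ = c' v u := by unfold c'; group

lemma c'_mul_left (u v w : G) : c' (u * v) w = v⁻¹ * c' u w * v * c' v w := by
  unfold c'; group

lemma c'_mul_right (u v w : G) : c' u (v * w) = c' u w * (w⁻¹ * c' u v * w) := by
  unfold c'; group

lemma c'_eq_one_of_commute {u v : G} (h : Commute u v) : c' u v = 1 := by
  have h1 : u⁻¹ * v⁻¹ * u * v = u⁻¹ * v⁻¹ * (u * v) := by group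
  unfold c'
  rw [h1, h.eq]; group

lemma c'_eq_commutatorElement (u v : G) : c' u v = ⁅u⁻¹, v⁻¹⁆ := by
  unfold c'; rw [commutatorElement_def]; group

lemma c'_mem_commutator (u v : G) : c' u v ∈ commutator G := by
  rw [c'_eq_commutatorElement]
  exact Subgroup.commutator_mem_commutator (Subgroup.mem_top _) (Subgroup.mem_top _)

lemma conj_eq_of_commute {p k : G} (h : Commute p k) : p⁻¹ * k * p = k := by
  rw [h.inv_left.eq]; group

/-- The main group-theoretic computation, valid in any group whose commutator
subgroup is abelian. -/
lemma main_identity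
    (hab : ∀ g ∈ commutator G, ∀ k ∈ commutator G, Commute g k)
    (X Y : G) (α β γ a b c : ℤ) :
    c' (X ^ α * Y ^ β * (c' X Y) ^ γ) (X ^ a * Y ^ b * (c' X Y) ^ c)
      = c' (X ^ α * Y ^ β) ((c' X Y) ^ c) * (c' (X ^ a * Y ^ b) ((c' X Y) ^ γ))⁻¹ *
        (Y ^ (-β) * c' (X ^ α) (Y ^ b) * Y ^ β) *
        (Y ^ (-b) * c' (X ^ a) (Y ^ β) * Y ^ b)⁻¹ := by
  set z0 : G := c' X Y with hz0
  set A : G := X ^ α * Y ^ β with hA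
  set B : G := X ^ a * Y ^ b with hB
  set P : G := z0 ^ γ with hP
  set R : G := z0 ^ c with hR
  have hz0m : z0 ∈ commutator G := c'_mem_commutator X Y
  have hPm : P ∈ commutator G := Subgroup.zpow_mem _ hz0m γ
  have hRm : R ∈ commutator G := Subgroup.zpow_mem _ hz0m c
  have hkAR : c' A R ∈ commutator G := c'_mem_commutator A R
  have hkAB : c' A B ∈ commutator G := c'_mem_commutator A B
  have hkPB : c' P B ∈ commutator G := c'_mem_commutator P B
  -- Step 1: expand the left-hand side.
  have e1 : c' (A * P) (B * R)
      = P⁻¹ * c' A (B * R) * P * c' P (B * R) := c'_mul_left A P (B * R)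
  have e2 : c' A (B * R) = c' A R * (R⁻¹ * c' A B * R) := c'_mul_right A B R
  have e3 : c' P (B * R) = c' P R * (R⁻¹ * c' P B * R) := c'_mul_right P B R
  have e4 : c' P R = 1 := c'_eq_one_of_commute ((Commute.refl z0).zpow_zpow γ c)
  have e5 : R⁻¹ * c' A B * R = c' A B := conj_eq_of_commute (hab R hRm _ hkAB)
  have e6 : R⁻¹ * c' P B * R = c' P B := conj_eq_of_commute (hab R hRm _ hkPB)
  have e7 : P⁻¹ * (c' A R * c' A B) * P = c' A R * c' A B :=
    conj_eq_of_commute (hab P hPm _ (Subgroup.mul_mem _ hkAR hkAB))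
  have lhs1 : c' (A * P) (B * R) = c' A R * c' A B * c' P B := by
    rw [e1, e2, e3, e4, e5, e6]
    calc P⁻¹ * (c' A R * c' A B) * P * (1 * c' P B)
        = P⁻¹ * (c' A R * c' A B) * P * c' P B := by group
      _ = c' A R * c' A B * c' P B := by rw [e7]
  have e8 : c' P B = (c' B P)⁻¹ := by rw [c'_inv]
  have e9 : Commute (c' A B) ((c' B P)⁻¹) :=
    (hab _ hkAB _ (c'_mem_commutator B P)).inv_right
  have lhs2 : c' (A * P) (B * R) = c' A R * (c' B P)⁻¹ * c' A B := by
    rw [lhs1, e8, mul_assoc, e9.eq, ← mul_assoc]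
  -- Step 2: expand `c' A B`.
  have f1 : c' A B = (Y ^ β)⁻¹ * c' (X ^ α) B * Y ^ β * c' (Y ^ β) B :=
    c'_mul_left (X ^ α) (Y ^ β) B
  have f2 : c' (X ^ α) B = c' (X ^ α) (Y ^ b) *
      ((Y ^ b)⁻¹ * c' (X ^ α) (X ^ a) * Y ^ b) := c'_mul_right (X ^ α) (X ^ a) (Y ^ b)
  have f3 : c' (X ^ α) (X ^ a) = 1 :=
    c'_eq_one_of_commute ((Commute.refl X).zpow_zpow α a)
  have f4 : c' (Y ^ β) B = c' (Y ^ β) (Y ^ b) *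
      ((Y ^ b)⁻¹ * c' (Y ^ β) (X ^ a) * Y ^ b) := c'_mul_right (Y ^ β) (X ^ a) (Y ^ b)
  have f5 : c' (Y ^ β) (Y ^ b) = 1 :=
    c'_eq_one_of_commute ((Commute.refl Y).zpow_zpow β b)
  have f6 : c' (Y ^ β) (X ^ a) = (c' (X ^ a) (Y ^ β))⁻¹ := by rw [c'_inv]
  have fAB : c' A B = (Y ^ β)⁻¹ * c' (X ^ α) (Y ^ b) * Y ^ β *
      ((Y ^ b)⁻¹ * (c' (X ^ a) (Y ^ β))⁻¹ * Y ^ b) := by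
    rw [f1, f2, f3, f4, f5, f6]; group
  rw [lhs2, fAB]
  rw [zpow_neg, zpow_neg]
  group

end Helpers

/-- `comm` agrees with the general `c'`. -/
lemma comm_eq_c' (u v : F) : comm u v = c' u v := rfl

theorem image_of_z (α β γ a b c : ℤ) :
    (φ α β γ a b c) z * (rhs α β γ a b c)⁻¹ ∈ derivedSeries F 2 := by
  set N := derivedSeries F 2 with hN
  haveI : N.Normal := derivedSeries_normal F 2
  rw [← QuotientGroup.eq_one_iff (G := F) (N := N)]
  set π : F →* F ⧸ N := QuotientGroup.mk' N with hπ
  -- the commutator subgroup of the quotient is abelian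
  have hab : ∀ g ∈ commutator (F ⧸ N), ∀ k ∈ commutator (F ⧸ N), Commute g k := by
    intro g hg k hk
    have hsurj : Function.Surjective π := QuotientGroup.mk'_surjective N
    have hmap : (derivedSeries F 1).map π = derivedSeries (F ⧸ N) 1 :=
      map_derivedSeries_eq hsurj 1
    rw [derivedSeries_one, derivedSeries_one] at hmap
    rw [← hmap] at hg hk
    obtain ⟨g', hg', rfl⟩ := hg
    obtain ⟨k', hk', rfl⟩ := hk
    have hmem : ⁅g', k'⁆ ∈ N := by
      rw [hN]
      exact Subgroup.commutator_mem_commutator hg' hk'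
    have h1 : π ⁅g', k'⁆ = 1 := (QuotientGroup.eq_one_iff _).mpr hmem
    rw [map_commutatorElement] at h1
    exact commutatorElement_eq_one_iff_commute.mp h1
  -- compute φ z
  have hφx : (φ α β γ a b c) x = x ^ α * y ^ β * z ^ γ := by
    simp [φ, x, FreeGroup.lift_apply_of]
  have hφy : (φ α β γ a b c) y = x ^ a * y ^ b * z ^ c := by
    simp [φ, y, FreeGroup.lift_apply_of]
  have hφz : (φ α β γ a b c) z = c' (x ^ α * y ^ β * z ^ γ) (x ^ a * y ^ b * z ^ c) := by
    simp only [z, map_mul, map_inv, hφx, hφy, c']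
  have key := main_identity hab (π x) (π y) α β γ a b c
  have hπc' : ∀ u v : F, π (c' u v) = c' (π u) (π v) := by
    intro u v; simp [c']
  have hπz : π z = c' (π x) (π y) := by
    rw [show z = c' x y from rfl, hπc']
  have hL : π ((φ α β γ a b c) z)
      = c' (π x ^ α * π y ^ β * (c' (π x) (π y)) ^ γ)
          (π x ^ a * π y ^ b * (c' (π x) (π y)) ^ c) := by
    rw [hφz, hπc']
    simp [hπz]
  have hR : π (rhs α β γ a b c)
      = c' (π x ^ α * π y ^ β) ((c' (π x) (π y)) ^ c) *
        (c' (π x ^ a * π y ^ b) ((c' (π x) (π y)) ^ γ))⁻¹ *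
        (π y ^ (-β) * c' (π x ^ α) (π y ^ b) * π y ^ β) *
        (π y ^ (-b) * c' (π x ^ a) (π y ^ β) * π y ^ b)⁻¹ := by
    simp only [rhs, comm_eq_c', map_mul, map_inv, map_zpow, hπc', hπz]
  have : π ((φ α β γ a b c) z) = π (rhs α β γ a b c) := by
    rw [hL, hR, key]
  calc (((φ α β γ a b c) z * (rhs α β γ a b c)⁻¹ : F) : F ⧸ N)
      = π ((φ α β γ a b c) z) * (π (rhs α β γ a b c))⁻¹ := by
        simp [hπ]
    _ = 1 := by rw [this]; group

end Stmt7
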